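/- The space KD, the quotient of the lexicographic product [0,1]×[0,1]×{0,1} obtained by identifying (t,0,0) with (t,1,1) for every t ∈ [0,1], is a continuous image of a compact Hausdorff 3-fibered space: there exist a compact Hausdorff space F, a continuous surjection F → KD, a metrizable space M and a continuous map g : F → M such that g⁻¹(z) has at most 3 elements for every z ∈ M. -/

import Mathlib

open Set TopologicalSpace



/-- A topological space `X` is metrizably fibered if there is a continuous map from `X`
to a metrizable space all of whose fibers are metrizable. -/
def MetrizablyFibered (X : Type*) [TopologicalSpace X] : Prop :=
  ∃ (M : Type) (_ : TopologicalSpace M), MetrizableSpace M ∧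
    ∃ f : X → M, Continuous f ∧ ∀ z : M, MetrizableSpace ↥(f ⁻¹' {z})

noncomputable instance : CompleteLinearOrder Bool :=
  Fintype.toCompleteLinearOrder _

section LexComplete
variable {α β : Type*} [CompleteLinearOrder α] [CompleteLinearOrder β]

private noncomputable def lexA (S : Set (Lex (α × β))) : α :=
  sSup ((fun x => (ofLex x).1) '' S)

private noncomputable def lexI (S : Set (Lex (α × β))) : α :=
  sInf ((fun x => (ofLex x).1) '' S)

noncomputable instance Lex.instSupSet : SupSet (Lex (α × β)) :=
  ⟨fun S => toLex (lexA S, sSup {b | toLex (lexA S, b) ∈ S})⟩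

noncomputable instance Lex.instInfSet : InfSet (Lex (α × β)) :=
  ⟨fun S => toLex (lexI S, sInf {b | toLex (lexI S, b) ∈ S})⟩

theorem isLUB_lexSup (S : Set (Lex (α × β))) : IsLUB S (sSup S) := by
  show IsLUB S (toLex (lexA S, sSup {b | toLex (lexA S, b) ∈ S}))
  constructor
  · intro x hx
    have hxe : x = toLex ((ofLex x).1, (ofLex x).2) := rfl
    rcases le_or_gt (lexA S) ((ofLex x).1) with h | h
    · have h1 : (ofLex x).1 ≤ lexA S := le_sSup ⟨x, hx, rfl⟩
      have he : (ofLex x).1 = lexA S := le_antisymm h1 h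
      have hx' : toLex (lexA S, (ofLex x).2) ∈ S := by rw [← he]; exact hx
      have h2 : (ofLex x).2 ≤ sSup {b | toLex (lexA S, b) ∈ S} := le_sSup hx'
      rw [hxe, Prod.Lex.le_iff]
      right; exact ⟨he, h2⟩
    · rw [hxe, Prod.Lex.le_iff]; left; exact h
  · intro u hu
    have hue : u = toLex ((ofLex u).1, (ofLex u).2) := rfl
    have hA : lexA S ≤ (ofLex u).1 := by
      apply sSup_le
      rintro a ⟨x, hx, rfl⟩
      have hle := hu hx
      rw [show x = toLex ((ofLex x).1, (ofLex x).2) from rfl, hue, Prod.Lex.le_iff] at hle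
      rcases hle with h | ⟨h, _⟩
      · exact h.le
      · exact h.le
    rcases lt_or_eq_of_le hA with h | h
    · rw [hue, Prod.Lex.le_iff]; left; exact h
    · rw [hue, Prod.Lex.le_iff]
      right
      refine ⟨h, sSup_le ?_⟩
      intro b hb
      have hle := hu hb
      rw [hue, Prod.Lex.le_iff] at hle
      rcases hle with h2 | ⟨_, h2⟩
      · rw [h] at h2; exact absurd h2 (lt_irrefl _)
      · exact h2

theorem isGLB_lexInf (S : Set (Lex (α × β))) : IsGLB S (sInf S) := by
  show IsGLB S (toLex (lexI S, sInf {b | toLex (lexI S, b) ∈ S}))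
  constructor
  · intro x hx
    have hxe : x = toLex ((ofLex x).1, (ofLex x).2) := rfl
    rcases le_or_gt ((ofLex x).1) (lexI S) with h | h
    · have h1 : lexI S ≤ (ofLex x).1 := sInf_le ⟨x, hx, rfl⟩
      have he : lexI S = (ofLex x).1 := le_antisymm h1 h
      have hx' : toLex (lexI S, (ofLex x).2) ∈ S := by rw [he]; exact hx
      have h2 : sInf {b | toLex (lexI S, b) ∈ S} ≤ (ofLex x).2 := sInf_le hx'
      rw [hxe, Prod.Lex.le_iff]
      right; exact ⟨he, h2⟩
    · rw [hxe, Prod.Lex.le_iff]; left; exact h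
  · intro u hu
    have hue : u = toLex ((ofLex u).1, (ofLex u).2) := rfl
    have hA : (ofLex u).1 ≤ lexI S := by
      apply le_sInf
      rintro a ⟨x, hx, rfl⟩
      have hle := hu hx
      rw [show x = toLex ((ofLex x).1, (ofLex x).2) from rfl, hue, Prod.Lex.le_iff] at hle
      rcases hle with h | ⟨h, _⟩
      · exact h.le
      · exact h.le
    rcases lt_or_eq_of_le hA with h | h
    · rw [hue, Prod.Lex.le_iff]; left; exact h
    · rw [hue, Prod.Lex.le_iff]
      right
      refine ⟨h, le_sInf ?_⟩
      intro b hb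
      have hle := hu hb
      rw [hue, Prod.Lex.le_iff] at hle
      rcases hle with h2 | ⟨h2, h3⟩
      · rw [h] at h2; exact absurd h2 (lt_irrefl _)
      · exact h3

noncomputable instance Lex.instCompleteLattice : CompleteLattice (Lex (α × β)) where
  __ := (inferInstance : Lattice (Lex (α × β)))
  __ := (inferInstance : BoundedOrder (Lex (α × β)))
  isLUB_sSup := isLUB_lexSup
  isGLB_sInf := isGLB_lexInf

noncomputable instance Lex.instCompleteLinearOrder : CompleteLinearOrder (Lex (α × β)) :=
  { Lex.instCompleteLattice, Prod.Lex.instLinearOrder _ _, LinearOrder.toBiheytingAlgebra _ with }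

end LexComplete

/-- The unit interval `[0,1]` as a linearly ordered set. -/
abbrev UnitInt : Type := ↥(Set.Icc (0 : ℝ) 1)

instance : Fact ((0:ℝ) ≤ 1) := ⟨by norm_num⟩
/-- `X = [0,1] ×_lex [0,1] ×_lex {0,1}` : the lexicographic product, where the two-point
set `{0,1}` is modelled by `Bool` (`false = 0 < 1 = true`). -/
abbrev XD : Type := Lex (UnitInt × Lex (UnitInt × Bool))

/-- `X` carries the order topology of the lexicographic order. -/
noncomputable instance : TopologicalSpace XD := Preorder.topology XD

instance : OrderTopology XD := ⟨rfl⟩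

/-- The identification relation: for each `t ∈ [0,1]`, the point `(t,0,0)` is glued to
the point `(t,1,1)`. -/
def rKD : XD → XD → Prop := fun u v =>
  ∃ t : UnitInt,
    u = toLex (t, toLex ((⟨0, by norm_num⟩ : UnitInt), false)) ∧
    v = toLex (t, toLex ((⟨1, by norm_num⟩ : UnitInt), true))

/-- `KD` : the quotient of `X` identifying `(t,0,0)` with `(t,1,1)` for all `t ∈ [0,1]`,
with the quotient topology. -/
abbrev KD : Type := Quot rKD

namespace KDProof

abbrev D : Type := Lex (UnitInt × Bool)

def bot2 : D := toLex ((⟨0, by norm_num⟩ : UnitInt), false)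
def top2 : D := toLex ((⟨1, by norm_num⟩ : UnitInt), true)
def mk (t : UnitInt) (d : D) : XD := toLex (t, d)

def q : XD → KD := Quot.mk rKD

lemma eqmk (x : XD) : x = mk (ofLex x).1 (ofLex x).2 := rfl

lemma mk_lt_mk {t u : UnitInt} {c d : D} : mk t c < mk u d ↔ t < u ∨ (t = u ∧ c < d) :=
  Prod.Lex.lt_iff

lemma mk_lt_mk_same {t : UnitInt} {c d : D} : mk t c < mk t d ↔ c < d := by
  rw [mk_lt_mk]
  simp

lemma d_lt_iff {c d : D} : c < d ↔
    (ofLex c).1 < (ofLex d).1 ∨ ((ofLex c).1 = (ofLex d).1 ∧ (ofLex c).2 < (ofLex d).2) :=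
  Prod.Lex.lt_iff

lemma zeroI_le (t : UnitInt) : (⟨0, by norm_num⟩ : UnitInt) ≤ t := t.2.1

lemma le_oneI (t : UnitInt) : t ≤ (⟨1, by norm_num⟩ : UnitInt) := t.2.2

lemma bot2_le (d : D) : bot2 ≤ d := by
  have := Prod.Lex.le_iff (x := toLex ((⟨0, by norm_num⟩ : UnitInt), false)) (y := d)
  refine this.mpr ?_
  rcases eq_or_lt_of_le (zeroI_le (ofLex d).1) with h | h
  · exact Or.inr ⟨h, Bool.false_le _⟩
  · exact Or.inl h

lemma le_top2 (d : D) : d ≤ top2 := by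
  have := Prod.Lex.le_iff (x := d) (y := toLex ((⟨1, by norm_num⟩ : UnitInt), true))
  refine this.mpr ?_
  rcases eq_or_lt_of_le (le_oneI (ofLex d).1) with h | h
  · exact Or.inr ⟨h, Bool.le_true _⟩
  · exact Or.inl h

lemma bot2_lt_top2 : bot2 < top2 := by
  rw [bot2, top2, Prod.Lex.lt_iff]
  left
  exact Subtype.mk_lt_mk.mpr (by norm_num)

lemma ofLex_toLex' {α β : Type*} (p : α × β) : ofLex (toLex p) = p := rfl

lemma mk_eq_mk {t u : UnitInt} {c d : D} : mk t c = mk u d ↔ t = u ∧ c = d := by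
  constructor
  · intro h
    have h1 := congrArg (fun x => (ofLex x).1) h
    have h2 := congrArg (fun x => (ofLex x).2) h
    exact ⟨h1, h2⟩
  · rintro ⟨rfl, rfl⟩; rfl

lemma bot2_ne_top2 : bot2 ≠ top2 := ne_of_lt bot2_lt_top2

noncomputable def nrep (x : XD) : XD :=
  if (ofLex x).2 = top2 then mk (ofLex x).1 bot2 else x

lemma nrep_rel {a b : XD} (h : rKD a b) : nrep a = nrep b := by
  obtain ⟨t, rfl, rfl⟩ := h
  show nrep (mk t bot2) = nrep (mk t top2)
  have h1 : nrep (mk t bot2) = if bot2 = top2 then mk t bot2 else mk t bot2 := rfl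
  have h2 : nrep (mk t top2) = if top2 = top2 then mk t bot2 else mk t top2 := rfl
  rw [h1, h2, if_neg bot2_ne_top2, if_pos rfl]

lemma qeq {a b : XD} : q a = q b ↔ a = b ∨ rKD a b ∨ rKD b a := by
  constructor
  · intro h
    have hn : nrep a = nrep b := by
      have := congrArg (Quot.lift nrep (fun x y r => nrep_rel r)) h
      exact this
    rw [nrep, nrep] at hn
    by_cases ha : (ofLex a).2 = top2 <;> by_cases hb : (ofLex b).2 = top2
    · rw [if_pos ha, if_pos hb] at hn
      left
      rw [eqmk a, eqmk b, ha, hb, (mk_eq_mk.mp hn).1]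
    · rw [if_pos ha, if_neg hb] at hn
      right; right
      refine ⟨(ofLex a).1, ?_, ?_⟩
      · rw [eqmk b, ← hn]; rfl
      · rw [eqmk a, ha]; rfl
    · rw [if_neg ha, if_pos hb] at hn
      right; left
      refine ⟨(ofLex b).1, ?_, ?_⟩
      · rw [eqmk a, hn]; rfl
      · rw [eqmk b, hb]; rfl
    · rw [if_neg ha, if_neg hb] at hn
      left; exact hn
  · rintro (rfl | h | h)
    · rfl
    · exact Quot.sound h
    · exact (Quot.sound h).symm

def Sat (U : Set XD) : Prop := ∀ a b : XD, rKD a b → (a ∈ U ↔ b ∈ U)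

lemma sat_mem_image {U : Set XD} (hU : Sat U) {x : XD} :
    q x ∈ q '' U ↔ x ∈ U := by
  constructor
  · rintro ⟨u, hu, he⟩
    rcases qeq.mp he with rfl | h | h
    · exact hu
    · exact (hU _ _ h).mp hu
    · exact (hU _ _ h).mpr hu
  · intro h; exact ⟨x, h, rfl⟩

lemma sat_isOpen_image {U : Set XD} (hU : Sat U) (ho : IsOpen U) :
    IsOpen (q '' U) := by
  rw [isOpen_coinduced (f := Quot.mk rKD)]
  have : (Quot.mk rKD) ⁻¹' (q '' U) = U := by
    ext x
    exact sat_mem_image hU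
  rwa [this]

noncomputable def p : XD → ℝ := fun x => ((ofLex x).1 : ℝ)

lemma p_mk (t : UnitInt) (d : D) : p (mk t d) = (t : ℝ) := rfl

theorem continuous_p : Continuous p := by
  have h : (UniformSpace.toTopologicalSpace : TopologicalSpace ℝ) =
      generateFrom {s : Set ℝ | ∃ a, s = Ioi a ∨ s = Iio a} :=
    OrderTopology.topology_eq_generate_intervals
  rw [continuous_iff_coinduced_le, h, le_generateFrom_iff_subset_isOpen]
  rintro s ⟨a, rfl | rfl⟩
  · show IsOpen (p ⁻¹' Ioi a)
    by_cases h0 : a < 0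
    · have : p ⁻¹' Ioi a = univ := by
        ext x
        simp only [mem_preimage, mem_Ioi, mem_univ, iff_true]
        exact lt_of_lt_of_le h0 (ofLex x).1.2.1
      rw [this]; exact isOpen_univ
    by_cases h1 : 1 ≤ a
    · have : p ⁻¹' Ioi a = ∅ := by
        ext x
        simp only [mem_preimage, mem_Ioi, mem_empty_iff_false, iff_false, not_lt]
        exact le_trans (ofLex x).1.2.2 h1
      rw [this]; exact isOpen_empty
    push_neg at h0 h1
    have : p ⁻¹' Ioi a = Ioi (mk ⟨a, ⟨h0, le_of_lt h1⟩⟩ top2) := by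
      ext x
      simp only [mem_preimage, mem_Ioi]
      rw [eqmk x, mk_lt_mk]
      constructor
      · intro hx
        left
        exact Subtype.mk_lt_mk.mpr hx
      · rintro (hx | ⟨hx, hx2⟩)
        · exact hx
        · exact absurd hx2 (not_lt_of_ge (le_top2 _))
    rw [this]; exact isOpen_Ioi
  · show IsOpen (p ⁻¹' Iio a)
    by_cases h0 : a ≤ 0
    · have : p ⁻¹' Iio a = ∅ := by
        ext x
        simp only [mem_preimage, mem_Iio, mem_empty_iff_false, iff_false, not_lt]
        exact le_trans h0 (ofLex x).1.2.1
      rw [this]; exact isOpen_empty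
    by_cases h1 : 1 < a
    · have : p ⁻¹' Iio a = univ := by
        ext x
        simp only [mem_preimage, mem_Iio, mem_univ, iff_true]
        exact lt_of_le_of_lt (ofLex x).1.2.2 h1
      rw [this]; exact isOpen_univ
    push_neg at h0 h1
    have : p ⁻¹' Iio a = Iio (mk ⟨a, ⟨le_of_lt h0, h1⟩⟩ bot2) := by
      ext x
      simp only [mem_preimage, mem_Iio]
      rw [eqmk x, mk_lt_mk]
      constructor
      · intro hx
        left
        exact Subtype.mk_lt_mk.mpr hx
      · rintro (hx | ⟨hx, hx2⟩)
        · exact hx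
        · exact absurd hx2 (not_lt_of_ge (bot2_le _))
    rw [this]; exact isOpen_Iio

noncomputable def P : KD → ℝ := Quot.lift p (by
  rintro a b ⟨t, rfl, rfl⟩
  rfl)

theorem continuous_P : Continuous P := continuous_quot_lift _ continuous_p

lemma P_q (x : XD) : P (q x) = ((ofLex x).1 : ℝ) := rfl

/-! ### The saturated open sets -/

def Wmid (t : UnitInt) (lo hi : D) : Set XD := Ioo (mk t lo) (mk t hi)

lemma Wmid_isOpen (t : UnitInt) (lo hi : D) : IsOpen (Wmid t lo hi) := isOpen_Ioo

lemma mem_Wmid_iff {t : UnitInt} {lo hi : D} {y : XD} :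
    y ∈ Wmid t lo hi ↔ (ofLex y).1 = t ∧ lo < (ofLex y).2 ∧ (ofLex y).2 < hi := by
  constructor
  · rintro ⟨h1, h2⟩
    rw [eqmk y, mk_lt_mk] at h1 h2
    rcases h1 with h1 | ⟨h1e, h1d⟩ <;> rcases h2 with h2 | ⟨h2e, h2d⟩
    · exact absurd (lt_trans h1 h2) (lt_irrefl _)
    · exact absurd h1 (h2e ▸ lt_irrefl _)
    · exact absurd h2 (h1e ▸ lt_irrefl _)
    · exact ⟨h1e.symm, h1d, h2d⟩
  · rintro ⟨h1, h2, h3⟩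
    constructor
    · rw [eqmk y, mk_lt_mk]; right; exact ⟨h1.symm, h2⟩
    · rw [eqmk y, mk_lt_mk]; right; exact ⟨h1, h3⟩

lemma Wmid_sat (t : UnitInt) (lo hi : D) : Sat (Wmid t lo hi) := by
  rintro a b ⟨u, rfl, rfl⟩
  constructor
  · intro h
    rw [mem_Wmid_iff] at h
    exact absurd h.2.1 (not_lt_of_ge (bot2_le lo))
  · intro h
    rw [mem_Wmid_iff] at h
    exact absurd h.2.2 (not_lt_of_ge (le_top2 hi))

def Wglue (t : UnitInt) (d1 d2 : D) (tl tr : ℝ) : Set XD :=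
  {x | tl < p x ∧ x < mk t d2} ∪ {x | mk t d1 < x ∧ p x < tr}

lemma Wglue_isOpen (t : UnitInt) (d1 d2 : D) (tl tr : ℝ) : IsOpen (Wglue t d1 d2 tl tr) := by
  apply IsOpen.union
  · exact (continuous_p.isOpen_preimage _ isOpen_Ioi).inter isOpen_Iio
  · exact isOpen_Ioi.inter (continuous_p.isOpen_preimage _ isOpen_Iio)

lemma Wglue_mem_bot {t : UnitInt} {d1 d2 : D} {tl tr : ℝ}
    (htl : tl < (t : ℝ)) (hd2 : bot2 < d2) : mk t bot2 ∈ Wglue t d1 d2 tl tr := by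
  left
  exact ⟨htl, mk_lt_mk_same.mpr hd2⟩

lemma Wglue_mem_top {t : UnitInt} {d1 d2 : D} {tl tr : ℝ}
    (htr : (t : ℝ) < tr) (hd1 : d1 < top2) : mk t top2 ∈ Wglue t d1 d2 tl tr := by
  right
  exact ⟨mk_lt_mk_same.mpr hd1, htr⟩

lemma Wglue_sat {t : UnitInt} {d1 d2 : D} {tl tr : ℝ}
    (htl : tl < (t : ℝ)) (htr : (t : ℝ) < tr) (hd1 : d1 < top2) (hd2 : bot2 < d2) :
    Sat (Wglue t d1 d2 tl tr) := by
  rintro a b ⟨u, rfl, rfl⟩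
  show mk u bot2 ∈ _ ↔ mk u top2 ∈ _
  constructor
  · rintro (⟨h1, h2⟩ | ⟨h1, h2⟩)
    · rw [mk_lt_mk] at h2
      rcases h2 with h2 | ⟨rfl, h2⟩
      · left
        exact ⟨h1, mk_lt_mk.mpr (Or.inl h2)⟩
      · right
        exact ⟨mk_lt_mk_same.mpr hd1, htr⟩
    · rw [mk_lt_mk] at h1
      rcases h1 with h1 | ⟨rfl, h1⟩
      · right
        exact ⟨mk_lt_mk.mpr (Or.inl h1), h2⟩
      · exact absurd h1 (not_lt_of_ge (bot2_le d1))
  · rintro (⟨h1, h2⟩ | ⟨h1, h2⟩)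
    · rw [mk_lt_mk] at h2
      rcases h2 with h2 | ⟨rfl, h2⟩
      · left
        exact ⟨h1, mk_lt_mk.mpr (Or.inl h2)⟩
      · exact absurd h2 (not_lt_of_ge (le_top2 d2))
    · rw [mk_lt_mk] at h1
      rcases h1 with h1 | ⟨rfl, h1⟩
      · right
        exact ⟨mk_lt_mk.mpr (Or.inl h1), h2⟩
      · left
        exact ⟨htl, mk_lt_mk_same.mpr hd2⟩

/-! ### Jump lemmas -/

lemma no_mid_jump (σ : UnitInt) :
    Ioo (toLex (σ, false)) (toLex (σ, true)) = (∅ : Set D) := by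
  ext d
  simp only [mem_Ioo, mem_empty_iff_false, iff_false, not_and]
  intro h1 h2
  rcases (Prod.Lex.lt_iff (x := toLex (σ, false)) (y := d)).mp h1 with ha | ⟨ha, hb⟩ <;>
    rcases (Prod.Lex.lt_iff (x := d) (y := toLex (σ, true))).mp h2 with hc | ⟨hc, hd⟩
  · exact absurd (lt_trans ha hc) (lt_irrefl _)
  · rw [hc] at ha; exact lt_irrefl _ ha
  · rw [← ha] at hc; exact lt_irrefl _ hc
  · rcases Bool.lt_iff.mp hb with ⟨-, h⟩
    rcases Bool.lt_iff.mp hd with ⟨h2', -⟩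
    rw [h] at h2'
    exact Bool.noConfusion h2' 

lemma bot2_lt_true (σ : UnitInt) : bot2 < toLex (σ, true) := by
  rw [bot2, Prod.Lex.lt_iff]
  rcases eq_or_lt_of_le (zeroI_le σ) with h | h
  · right; exact ⟨h, by simp [Bool.lt_iff]⟩
  · left; exact h

lemma false_lt_top2 (σ : UnitInt) : toLex (σ, false) < top2 := by
  rw [top2, Prod.Lex.lt_iff]
  rcases eq_or_lt_of_le (le_oneI σ) with h | h
  · right; exact ⟨h, by simp [Bool.lt_iff]⟩
  · left; exact h

lemma eqmk2 (d : D) : d = toLex ((ofLex d).1, (ofLex d).2) := rfl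

lemma unit_dense {a b : UnitInt} (h : a < b) : ∃ m : UnitInt, a < m ∧ m < b := by
  obtain ⟨x, hx1, hx2⟩ := exists_between (Subtype.coe_lt_coe.mpr h : (a:ℝ) < b)
  refine ⟨⟨x, le_trans a.2.1 (le_of_lt hx1), le_trans (le_of_lt hx2) b.2.2⟩, ?_, ?_⟩
  · exact Subtype.mk_lt_mk.mpr hx1
  · exact Subtype.mk_lt_mk.mpr hx2

lemma jump_below (d : D) (hd : d ≠ bot2) :
    ∃ l d2 : D, l < d ∧ bot2 < d2 ∧ Ioo l d2 = (∅ : Set D) := by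
  rcases Bool.eq_false_or_eq_true (ofLex d).2 with hb | hb
  · refine ⟨toLex ((ofLex d).1, false), toLex ((ofLex d).1, true), ?_, bot2_lt_true _,
      no_mid_jump _⟩
    rw [eqmk2 d, Prod.Lex.lt_iff]
    right
    exact ⟨rfl, by rw [hb]; simp [Bool.lt_iff]⟩
  · -- b = false, so σ ≠ 0
    have hσ : (⟨0, by norm_num⟩ : UnitInt) < (ofLex d).1 := by
      rcases eq_or_lt_of_le (zeroI_le (ofLex d).1) with h | h
      · exfalso; apply hd; rw [eqmk2 d, hb, ← h]; rfl
      · exact h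
    obtain ⟨m, -, hm2⟩ := unit_dense hσ
    refine ⟨toLex (m, false), toLex (m, true), ?_, bot2_lt_true m, no_mid_jump m⟩
    rw [eqmk2 d, Prod.Lex.lt_iff]
    left; exact hm2

lemma jump_above (d : D) (hd : d ≠ top2) :
    ∃ d1 hh : D, d < hh ∧ d1 < top2 ∧ Ioo d1 hh = (∅ : Set D) := by
  rcases Bool.eq_false_or_eq_true (ofLex d).2 with hb | hb
  · -- b = true, so σ ≠ 1
    have hσ : (ofLex d).1 < (⟨1, by norm_num⟩ : UnitInt) := by
      rcases eq_or_lt_of_le (le_oneI (ofLex d).1) with h | h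
      · exfalso; apply hd; rw [eqmk2 d, hb, h]; rfl
      · exact h
    obtain ⟨m, hm1, -⟩ := unit_dense hσ
    refine ⟨toLex (m, false), toLex (m, true), ?_, false_lt_top2 m, no_mid_jump m⟩
    rw [eqmk2 d, Prod.Lex.lt_iff]
    left; exact hm1
  · refine ⟨toLex ((ofLex d).1, false), toLex ((ofLex d).1, true), ?_, false_lt_top2 _,
      no_mid_jump _⟩
    rw [eqmk2 d, Prod.Lex.lt_iff]
    right
    exact ⟨rfl, by rw [hb]; simp [Bool.lt_iff]⟩

lemma jump_mid {c d : D} (h : c < d) :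
    ∃ l hh : D, c < hh ∧ l < d ∧ Ioo l hh = (∅ : Set D) := by
  rcases (Prod.Lex.lt_iff (x := c) (y := d)).mp h with h1 | ⟨h1, h2⟩
  · obtain ⟨m, hm1, hm2⟩ := unit_dense h1
    refine ⟨toLex (m, false), toLex (m, true), ?_, ?_, no_mid_jump m⟩
    · rw [eqmk2 c, Prod.Lex.lt_iff]; left; exact hm1
    · rw [eqmk2 d, Prod.Lex.lt_iff]; left; exact hm2
  · have hc2 : (ofLex c).2 = false := (Bool.lt_iff.mp h2).1
    have hd2 : (ofLex d).2 = true := (Bool.lt_iff.mp h2).2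
    refine ⟨c, d, h, h, ?_⟩
    have : c = toLex ((ofLex c).1, false) := by conv_lhs => rw [eqmk2 c, hc2]
    have hd' : d = toLex ((ofLex c).1, true) := by conv_lhs => rw [eqmk2 d, hd2, ← h1]
    rw [this, hd']
    exact no_mid_jump _

/-! ### Separation -/

def SepSets (a b : XD) : Prop :=
  ∃ U V : Set XD, IsOpen U ∧ IsOpen V ∧ Sat U ∧ Sat V ∧ a ∈ U ∧ b ∈ V ∧
    ∀ z, z ∈ U → z ∈ V → False

lemma SepSets.symm {a b : XD} (h : SepSets a b) : SepSets b a := by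
  obtain ⟨U, V, h1, h2, h3, h4, h5, h6, h7⟩ := h
  exact ⟨V, U, h2, h1, h4, h3, h6, h5, fun z hz hz' => h7 z hz' hz⟩

lemma lt_mk_top_p {z : XD} {t : UnitInt} (h : z < mk t top2) : p z ≤ (t : ℝ) := by
  rw [eqmk z, mk_lt_mk] at h
  rcases h with h | ⟨h, -⟩
  · exact le_of_lt (Subtype.coe_lt_coe.mpr h)
  · exact le_of_eq (congrArg _ h)

lemma mk_bot_lt_p {z : XD} {t : UnitInt} (h : mk t bot2 < z) : (t : ℝ) ≤ p z := by
  rw [eqmk z, mk_lt_mk] at h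
  rcases h with h | ⟨h, -⟩
  · exact le_of_lt (Subtype.coe_lt_coe.mpr h)
  · exact le_of_eq (congrArg _ h)

lemma lt_mk_d {z : XD} {t : UnitInt} {d : D} (h : z < mk t d) (h1 : (ofLex z).1 = t) :
    (ofLex z).2 < d := by
  rw [eqmk z, mk_lt_mk, h1] at h
  rcases h with h | ⟨-, h⟩
  · exact absurd h (lt_irrefl _)
  · exact h

lemma mk_d_lt {z : XD} {t : UnitInt} {d : D} (h : mk t d < z) (h1 : (ofLex z).1 = t) :
    d < (ofLex z).2 := by
  rw [eqmk z, mk_lt_mk, h1] at h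
  rcases h with h | ⟨-, h⟩
  · exact absurd h (lt_irrefl _)
  · exact h

lemma sep_gg {t t' : UnitInt} (h : (t : ℝ) < t') : SepSets (mk t bot2) (mk t' bot2) := by
  set m := (((t : ℝ) + t') / 2) with hm
  have hm1 : (t : ℝ) < m := by rw [hm]; linarith
  have hm2 : m < (t' : ℝ) := by rw [hm]; linarith
  refine ⟨Wglue t bot2 top2 ((t : ℝ) - 1) m, Wglue t' bot2 top2 m ((t' : ℝ) + 1),
    Wglue_isOpen _ _ _ _ _, Wglue_isOpen _ _ _ _ _,
    Wglue_sat (by linarith) hm1 bot2_lt_top2 bot2_lt_top2,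
    Wglue_sat hm2 (lt_add_one _) bot2_lt_top2 bot2_lt_top2,
    Wglue_mem_bot (by linarith) bot2_lt_top2,
    Wglue_mem_bot hm2 bot2_lt_top2, ?_⟩
  intro z hz hz'
  have h1 : p z < m := by
    rcases hz with ⟨-, h2⟩ | ⟨-, h2⟩
    · exact lt_of_le_of_lt (lt_mk_top_p h2) hm1
    · exact h2
  have h2 : m < p z := by
    rcases hz' with ⟨h2, -⟩ | ⟨h2, -⟩
    · exact h2
    · exact lt_of_lt_of_le hm2 (mk_bot_lt_p h2)
  exact lt_irrefl _ (lt_trans h1 h2)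

lemma sep_gi_same {t : UnitInt} {d : D} (hd1 : d ≠ bot2) (hd2 : d ≠ top2) :
    SepSets (mk t bot2) (mk t d) := by
  obtain ⟨l, d2, hl, hd2', hE⟩ := jump_below d hd1
  obtain ⟨d1, hh, hhh, hd1', hE'⟩ := jump_above d hd2
  refine ⟨Wglue t d1 d2 ((t : ℝ) - 1) ((t : ℝ) + 1), Wmid t l hh,
    Wglue_isOpen _ _ _ _ _, Wmid_isOpen _ _ _,
    Wglue_sat (sub_one_lt _) (lt_add_one _) hd1' hd2',
    Wmid_sat _ _ _,
    Wglue_mem_bot (sub_one_lt _) hd2',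
    mem_Wmid_iff.mpr ⟨rfl, hl, hhh⟩, ?_⟩
  intro z hz hz'
  rw [mem_Wmid_iff] at hz'
  obtain ⟨hz1, hz2, hz3⟩ := hz'
  rcases hz with ⟨-, h2⟩ | ⟨h2, -⟩
  · exact eq_empty_iff_forall_notMem.mp hE (ofLex z).2 ⟨hz2, lt_mk_d h2 hz1⟩
  · exact eq_empty_iff_forall_notMem.mp hE' (ofLex z).2 ⟨mk_d_lt h2 hz1, hz3⟩

lemma sep_gi_left {t t' : UnitInt} {d : D} (h : (t' : ℝ) < t)
    (hd1 : d ≠ bot2) (hd2 : d ≠ top2) : SepSets (mk t bot2) (mk t' d) := by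
  set m := (((t' : ℝ) + t) / 2) with hm
  have hm1 : (t' : ℝ) < m := by rw [hm]; linarith
  have hm2 : m < (t : ℝ) := by rw [hm]; linarith
  refine ⟨Wglue t bot2 top2 m ((t : ℝ) + 1), Wmid t' bot2 top2,
    Wglue_isOpen _ _ _ _ _, Wmid_isOpen _ _ _,
    Wglue_sat hm2 (lt_add_one _) bot2_lt_top2 bot2_lt_top2,
    Wmid_sat _ _ _,
    Wglue_mem_bot hm2 bot2_lt_top2,
    mem_Wmid_iff.mpr ⟨rfl, lt_of_le_of_ne (bot2_le d) (Ne.symm hd1),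
      lt_of_le_of_ne (le_top2 d) hd2⟩, ?_⟩
  intro z hz hz'
  rw [mem_Wmid_iff] at hz'
  have hpz : p z = (t' : ℝ) := by rw [p, hz'.1]
  rcases hz with ⟨h2, -⟩ | ⟨h2, -⟩
  · rw [hpz] at h2; exact lt_irrefl _ (lt_trans h2 hm1)
  · have := mk_bot_lt_p h2
    rw [hpz] at this
    linarith

lemma sep_gi_right {t t' : UnitInt} {d : D} (h : (t : ℝ) < t')
    (hd1 : d ≠ bot2) (hd2 : d ≠ top2) : SepSets (mk t bot2) (mk t' d) := by
  set m := (((t : ℝ) + t') / 2) with hm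
  have hm1 : (t : ℝ) < m := by rw [hm]; linarith
  have hm2 : m < (t' : ℝ) := by rw [hm]; linarith
  refine ⟨Wglue t bot2 top2 ((t : ℝ) - 1) m, Wmid t' bot2 top2,
    Wglue_isOpen _ _ _ _ _, Wmid_isOpen _ _ _,
    Wglue_sat (sub_one_lt _) hm1 bot2_lt_top2 bot2_lt_top2,
    Wmid_sat _ _ _,
    Wglue_mem_bot (sub_one_lt _) bot2_lt_top2,
    mem_Wmid_iff.mpr ⟨rfl, lt_of_le_of_ne (bot2_le d) (Ne.symm hd1),
      lt_of_le_of_ne (le_top2 d) hd2⟩, ?_⟩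
  intro z hz hz'
  rw [mem_Wmid_iff] at hz'
  have hpz : p z = (t' : ℝ) := by rw [p, hz'.1]
  rcases hz with ⟨-, h2⟩ | ⟨-, h2⟩
  · have := lt_mk_top_p h2
    rw [hpz] at this
    linarith
  · rw [hpz] at h2; linarith

lemma sep_ii_same {t : UnitInt} {c d : D} (hc1 : c ≠ bot2) (hd2 : d ≠ top2)
    (h : c < d) : SepSets (mk t c) (mk t d) := by
  obtain ⟨l, hh, h1, h2, hE⟩ := jump_mid h
  refine ⟨Wmid t bot2 hh, Wmid t l top2, Wmid_isOpen _ _ _, Wmid_isOpen _ _ _,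
    Wmid_sat _ _ _, Wmid_sat _ _ _,
    mem_Wmid_iff.mpr ⟨rfl, lt_of_le_of_ne (bot2_le c) (Ne.symm hc1), h1⟩,
    mem_Wmid_iff.mpr ⟨rfl, h2, lt_of_le_of_ne (le_top2 d) hd2⟩, ?_⟩
  intro z hz hz'
  rw [mem_Wmid_iff] at hz hz'
  exact eq_empty_iff_forall_notMem.mp hE (ofLex z).2 ⟨hz'.2.1, hz.2.2⟩

lemma sep_ii_diff {t t' : UnitInt} {c d : D} (h : t ≠ t')
    (hc1 : c ≠ bot2) (hc2 : c ≠ top2) (hd1 : d ≠ bot2) (hd2 : d ≠ top2) :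
    SepSets (mk t c) (mk t' d) := by
  refine ⟨Wmid t bot2 top2, Wmid t' bot2 top2, Wmid_isOpen _ _ _, Wmid_isOpen _ _ _,
    Wmid_sat _ _ _, Wmid_sat _ _ _,
    mem_Wmid_iff.mpr ⟨rfl, lt_of_le_of_ne (bot2_le c) (Ne.symm hc1),
      lt_of_le_of_ne (le_top2 c) hc2⟩,
    mem_Wmid_iff.mpr ⟨rfl, lt_of_le_of_ne (bot2_le d) (Ne.symm hd1),
      lt_of_le_of_ne (le_top2 d) hd2⟩, ?_⟩
  intro z hz hz'
  rw [mem_Wmid_iff] at hz hz'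
  exact h (hz.1 ▸ hz'.1 ▸ rfl)

lemma unitne {t t' : UnitInt} (h : t ≠ t') : (t : ℝ) ≠ (t' : ℝ) :=
  fun hh => h (Subtype.ext hh)

lemma sep_all {a b : XD} (h : q a ≠ q b) (ha : (ofLex a).2 ≠ top2)
    (hb : (ofLex b).2 ≠ top2) : SepSets a b := by
  rw [eqmk a, eqmk b]
  by_cases hda : (ofLex a).2 = bot2 <;> by_cases hdb : (ofLex b).2 = bot2
  · rw [hda, hdb]
    have hne : (ofLex a).1 ≠ (ofLex b).1 := by
      intro he
      exact h (congrArg q (by rw [eqmk a, eqmk b, hda, hdb, he]))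
    rcases lt_trichotomy ((ofLex a).1 : ℝ) ((ofLex b).1 : ℝ) with hlt | heq | hgt
    · exact sep_gg hlt
    · exact absurd (Subtype.ext heq) hne
    · exact (sep_gg hgt).symm
  · rw [hda]
    by_cases hte : (ofLex a).1 = (ofLex b).1
    · rw [hte]
      exact sep_gi_same hdb hb
    · rcases lt_trichotomy ((ofLex a).1 : ℝ) ((ofLex b).1 : ℝ) with hlt | heq | hgt
      · exact sep_gi_right hlt hdb hb
      · exact absurd (Subtype.ext heq) hte
      · exact sep_gi_left hgt hdb hb
  · rw [hdb]
    apply SepSets.symm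
    by_cases hte : (ofLex b).1 = (ofLex a).1
    · rw [hte]
      exact sep_gi_same hda ha
    · rcases lt_trichotomy ((ofLex b).1 : ℝ) ((ofLex a).1 : ℝ) with hlt | heq | hgt
      · exact sep_gi_right hlt hda ha
      · exact absurd (Subtype.ext heq) hte
      · exact sep_gi_left hgt hda ha
  · by_cases hte : (ofLex a).1 = (ofLex b).1
    · rw [hte]
      have hne : (ofLex a).2 ≠ (ofLex b).2 := by
        intro he
        exact h (congrArg q (by rw [eqmk a, eqmk b, hte, he]))
      rcases lt_trichotomy (ofLex a).2 (ofLex b).2 with hlt | heq | hgt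
      · exact sep_ii_same hda hb hlt
      · exact absurd heq hne
      · exact (sep_ii_same hdb ha hgt).symm
    · exact sep_ii_diff hte hda ha hdb hb

lemma norm_rep (a : XD) : ∃ a' : XD, q a' = q a ∧ (ofLex a').2 ≠ top2 := by
  by_cases hda : (ofLex a).2 = top2
  · refine ⟨mk (ofLex a).1 bot2, ?_, bot2_ne_top2⟩
    apply Quot.sound
    have hh : a = mk (ofLex a).1 top2 := by conv_lhs => rw [eqmk a, hda]
    exact ⟨(ofLex a).1, rfl, hh⟩
  · exact ⟨a, rfl, hda⟩

instance KD_t2 : T2Space KD := by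
  constructor
  intro x y
  induction x using Quot.ind with | _ a =>
  induction y using Quot.ind with | _ b =>
  intro hxy
  obtain ⟨a', ha1, ha2⟩ := norm_rep a
  obtain ⟨b', hb1, hb2⟩ := norm_rep b
  have hne : q a' ≠ q b' := by
    rw [ha1, hb1]; exact hxy
  obtain ⟨U, V, hUo, hVo, hUs, hVs, haU, hbV, hdisj⟩ := sep_all hne ha2 hb2
  refine ⟨q '' U, q '' V, sat_isOpen_image hUs hUo, sat_isOpen_image hVs hVo, ?_, ?_, ?_⟩
  · show q a ∈ _
    rw [← ha1]
    exact ⟨a', haU, rfl⟩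
  · show q b ∈ _
    rw [← hb1]
    exact ⟨b', hbV, rfl⟩
  · rw [Set.disjoint_left]
    rintro k ⟨u, huU, rfl⟩ hkV
    exact hdisj u huU ((sat_mem_image hVs).mp hkV)

/-! ### The circle map -/

noncomputable def e (s : ℝ) : ℂ := Complex.exp ((2 * Real.pi * s : ℝ) * Complex.I)

lemma abs_e (s : ℝ) : ‖e s‖ = 1 := Complex.norm_exp_ofReal_mul_I _

lemma cont_e : Continuous e := by
  apply Complex.continuous_exp.comp
  exact (Complex.continuous_ofReal.comp (by continuity)).mul continuous_const

lemma e_zero : e 0 = 1 := by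
  rw [e]
  norm_num

lemma e_one : e 1 = 1 := by
  rw [e]
  rw [show ((2 * Real.pi * 1 : ℝ) : ℂ) * Complex.I = 2 * ↑Real.pi * Complex.I by push_cast; ring]
  exact Complex.exp_two_pi_mul_I

lemma e_inj {s s' : ℝ} (hs : s ∈ Icc (0:ℝ) 1) (hs' : s' ∈ Ico (0:ℝ) 1)
    (he : e s = e s') : s = s' ∨ (s = 1 ∧ s' = 0) := by
  rw [e, e, Complex.exp_eq_exp_iff_exists_int] at he
  obtain ⟨n, hn⟩ := he
  have hn' : ((2 * Real.pi * s : ℝ) : ℂ) = ((2 * Real.pi * s' + n * (2 * Real.pi) : ℝ) : ℂ) := by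
    apply mul_right_cancel₀ Complex.I_ne_zero
    rw [hn]; push_cast; ring
  have hr : 2 * Real.pi * s = 2 * Real.pi * s' + n * (2 * Real.pi) := by exact_mod_cast hn'
  have hpi := Real.pi_pos
  have hsn : s = s' + n := by
    have h2 : 2 * Real.pi * s = 2 * Real.pi * (s' + n) := by ring_nf; ring_nf at hr; linarith
    have := mul_left_cancel₀ (by positivity : (2 * Real.pi) ≠ 0) h2
    linarith
  have hb1 : (-1 : ℝ) < n := by
    have := hs.2; have := hs'.1; have := hs.1; have := hs'.2; linarith
  have hb2 : (n : ℝ) ≤ 1 := by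
    have := hs.2; have := hs'.1; have := hs.1; have := hs'.2; linarith
  have hb1' : (-1 : ℤ) < n := by exact_mod_cast hb1
  have hb2' : n ≤ (1 : ℤ) := by exact_mod_cast hb2
  interval_cases n
  · left; rw [hsn]; push_cast; ring
  · right
    have hs1 : s = s' + 1 := by rw [hsn]; push_cast; ring
    constructor
    · have := hs.2; have := hs'.1; linarith
    · have := hs.2; have := hs'.1; linarith

lemma exists_s0 {z : ℂ} (hz : ‖z‖ = 1) :
    ∃ s : ℝ, s ∈ Ico (0:ℝ) 1 ∧ e s = z := by
  have hθ := Complex.arg_mem_Ioc z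
  have hze : Complex.exp ((Complex.arg z : ℝ) * Complex.I) = z := by
    have := Complex.norm_mul_exp_arg_mul_I z
    rwa [hz, Complex.ofReal_one, one_mul] at this
  have hpi := Real.pi_pos
  rcases le_or_gt 0 (Complex.arg z) with h0 | h0
  · refine ⟨Complex.arg z / (2 * Real.pi), ⟨by positivity, ?_⟩, ?_⟩
    · rw [div_lt_one (by positivity)]
      have := hθ.2; linarith
    · rw [e, show (2 * Real.pi * (Complex.arg z / (2 * Real.pi)) : ℝ) = Complex.arg z by
        field_simp]
      exact hze
  · refine ⟨Complex.arg z / (2 * Real.pi) + 1, ⟨?_, ?_⟩, ?_⟩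
    · have harg := hθ.1
      have h2 : (-1 : ℝ) < Complex.arg z / (2 * Real.pi) := by
        rw [lt_div_iff₀ (by positivity : (0:ℝ) < 2 * Real.pi)]
        linarith
      linarith
    · have h2 : Complex.arg z / (2 * Real.pi) < 0 := by
        apply div_neg_of_neg_of_pos h0 (by positivity)
      linarith
    · rw [e, show (2 * Real.pi * (Complex.arg z / (2 * Real.pi) + 1) : ℝ)
          = Complex.arg z + 2 * Real.pi by field_simp]
      push_cast
      rw [add_mul, Complex.exp_add]
      rw [show (2 : ℂ) * ↑Real.pi * Complex.I = 2 * ↑Real.pi * Complex.I from rfl]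
      rw [Complex.exp_two_pi_mul_I, mul_one]
      exact hze

/-! ### The graph and its closure -/

noncomputable def Phi (x : XD) : ℂ := e ((ofLex (ofLex x).2).1 : ℝ)

def G : Set (KD × ℂ) := Set.range (fun y : XD => (q y, Phi y))

lemma Phi_mk (t : UnitInt) (d : D) : Phi (mk t d) = e ((ofLex d).1 : ℝ) := rfl

lemma not_in_closure {t : UnitInt} {d : D} (hd1 : d ≠ bot2) (hd2 : d ≠ top2) {z : ℂ}
    (hz : e ((ofLex d).1 : ℝ) ≠ z) : (q (mk t d), z) ∉ closure G := by
  set s : ℝ := ((ofLex d).1 : ℝ) with hs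
  have hs0 : (0:ℝ) ≤ s := (ofLex d).1.2.1
  have hs1 : s ≤ 1 := (ofLex d).1.2.2
  have hε : 0 < dist (e s) z / 2 := by
    have := dist_pos.mpr hz
    linarith
  set ε := dist (e s) z / 2 with hεd
  obtain ⟨δ, hδ, hδe⟩ := Metric.continuousAt_iff.mp cont_e.continuousAt ε hε
  have haux1 : max 0 (s - δ/2) ∈ Set.Icc (0:ℝ) 1 :=
    ⟨le_max_left _ _, max_le (by norm_num) (by linarith)⟩
  have haux2 : min 1 (s + δ/2) ∈ Set.Icc (0:ℝ) 1 :=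
    ⟨le_min (by norm_num) (by linarith), min_le_left _ _⟩
  set aI : UnitInt := ⟨max 0 (s - δ/2), haux1⟩ with haI
  set bI : UnitInt := ⟨min 1 (s + δ/2), haux2⟩ with hbI
  set lo : D := toLex (aI, false) with hlo
  set hi : D := toLex (bI, true) with hhi
  have hlod : lo < d := by
    rw [hlo, eqmk2 d, Prod.Lex.lt_iff]
    rcases lt_or_eq_of_le hs0 with hpos | hzero
    · left
      apply Subtype.mk_lt_mk.mpr
      apply max_lt hpos (by linarith)
    · right
      constructor
      · refine Subtype.ext ?_
        show max 0 (s - δ/2) = ((ofLex d).1 : ℝ)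
        rw [← hs, ← hzero]
        exact max_eq_left (by linarith)
      · -- second coordinate must be true
        rcases Bool.eq_false_or_eq_true (ofLex d).2 with hb | hb
        · rw [hb]; simp [Bool.lt_iff]
        · exfalso
          apply hd1
          rw [eqmk2 d, hb]
          have : (ofLex d).1 = (⟨0, by norm_num⟩ : UnitInt) := Subtype.ext (by rw [← hs, ← hzero])
          rw [this]
          rfl
  have hdhi : d < hi := by
    rw [hhi, eqmk2 d, Prod.Lex.lt_iff]
    rcases lt_or_eq_of_le hs1 with hlt | hone
    · left
      apply Subtype.mk_lt_mk.mpr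
      apply lt_min hlt (by linarith)
    · right
      constructor
      · refine Subtype.ext ?_
        show ((ofLex d).1 : ℝ) = min 1 (s + δ/2)
        rw [← hs, hone]
        exact (min_eq_left (by linarith)).symm
      · rcases Bool.eq_false_or_eq_true (ofLex d).2 with hb | hb
        · exfalso
          apply hd2
          rw [eqmk2 d, hb]
          have h9 : (ofLex d).1 = (⟨1, by norm_num⟩ : UnitInt) := by
            refine Subtype.ext ?_
            show ((ofLex d).1 : ℝ) = 1
            rw [← hs]; exact hone
          rw [h9]
          rfl
        · rw [hb]; simp [Bool.lt_iff]
  have hmem : mk t d ∈ Wmid t lo hi := mem_Wmid_iff.mpr ⟨rfl, hlod, hdhi⟩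
  have hfar : ∀ y ∈ Wmid t lo hi, ε ≤ dist (Phi y) z := by
    intro y hy
    rw [mem_Wmid_iff] at hy
    obtain ⟨-, hy2, hy3⟩ := hy
    set σ : ℝ := ((ofLex (ofLex y).2).1 : ℝ) with hσ
    have h1 : aI ≤ (ofLex (ofLex y).2).1 := by
      rcases Prod.Lex.lt_iff.mp hy2 with hcase | ⟨hcase, -⟩
      · exact le_of_lt hcase
      · exact le_of_eq hcase
    have h2 : (ofLex (ofLex y).2).1 ≤ bI := by
      rcases Prod.Lex.lt_iff.mp hy3 with hcase | ⟨hcase, -⟩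
      · exact le_of_lt hcase
      · exact le_of_eq hcase
    have hσd : dist σ s < δ := by
      rw [Real.dist_eq, abs_lt]
      have e1 : max 0 (s - δ/2) ≤ σ := h1
      have e2 : σ ≤ min 1 (s + δ/2) := h2
      have e3 : s - δ/2 ≤ σ := le_trans (le_max_right _ _) e1
      have e4 : σ ≤ s + δ/2 := le_trans e2 (min_le_right _ _)
      constructor <;> linarith
    have hclose : dist (e σ) (e s) < ε := hδe hσd
    have htri := dist_triangle (e s) (e σ) z
    have : Phi y = e σ := rfl
    rw [this]
    rw [dist_comm (e s) (e σ)] at htri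
    rw [hεd]
    rw [hεd] at hclose
    linarith
  intro hcl
  rw [mem_closure_iff] at hcl
  obtain ⟨w, hwO, hwG⟩ := hcl ((q '' Wmid t lo hi) ×ˢ Metric.ball z ε)
    (IsOpen.prod (sat_isOpen_image (Wmid_sat _ _ _) (Wmid_isOpen _ _ _)) Metric.isOpen_ball)
    ⟨⟨mk t d, hmem, rfl⟩, Metric.mem_ball_self hε⟩
  obtain ⟨y, rfl⟩ := hwG
  have hyU : y ∈ Wmid t lo hi := (sat_mem_image (Wmid_sat _ _ _)).mp hwO.1
  have := hfar y hyU
  have hball := hwO.2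
  rw [Metric.mem_ball] at hball
  linarith

lemma mem_T {x : XD} {z : ℂ} (s0 s1 : UnitInt) (hs0lt : (s0 : ℝ) < 1)
    (he0 : e (s0 : ℝ) = z) (he1 : e (s1 : ℝ) = z)
    (hcase : ((s0 : ℝ) = 0 ∧ (s1 : ℝ) = 1) ∨ (((s0 : ℝ) ≠ 0) ∧ s1 = s0))
    (h : (q x, z) ∈ closure G) :
    q x = q (mk (ofLex x).1 bot2) ∨ q x = q (mk (ofLex x).1 (toLex (s0, true)))
      ∨ q x = q (mk (ofLex x).1 (toLex (s1, false))) := by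
  set t := (ofLex x).1 with ht
  set d := (ofLex x).2 with hd
  by_cases hd1 : d = bot2
  · left
    rw [eqmk x, ← ht, ← hd, hd1]
  by_cases hd2 : d = top2
  · left
    have : q (mk t bot2) = q (mk t top2) := Quot.sound ⟨t, rfl, rfl⟩
    rw [eqmk x, ← ht, ← hd, hd2, ← this]
  -- inner case
  have hx : x = mk t d := rfl
  have hee : e ((ofLex d).1 : ℝ) = z := by
    by_contra hne
    exact not_in_closure hd1 hd2 hne (by rw [← hx]; exact h)
  have hIcc : ((ofLex d).1 : ℝ) ∈ Icc (0:ℝ) 1 := (ofLex d).1.2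
  have hIco : ((s0 : ℝ)) ∈ Ico (0:ℝ) 1 := ⟨s0.2.1, hs0lt⟩
  rcases e_inj hIcc hIco (by rw [hee, he0]) with hσ | ⟨hσ1, hσ0⟩
  · -- σ = s0
    have hfst : (ofLex d).1 = s0 := Subtype.ext hσ
    rcases Bool.eq_false_or_eq_true (ofLex d).2 with hb | hb
    · -- b = true : middle element
      right; left
      rw [eqmk x, ← ht, ← hd]
      congr 1
      rw [eqmk2 d, hb, hfst]
    · -- b = false : σ ≠ 0 so s1 = s0
      have hσne : (s0 : ℝ) ≠ 0 := by
        intro h0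
        apply hd1
        rw [eqmk2 d, hb, hfst]
        have : s0 = (⟨0, by norm_num⟩ : UnitInt) := Subtype.ext h0
        rw [this]
        rfl
      have hs1s0 : s1 = s0 := by
        rcases hcase with ⟨h1, -⟩ | ⟨-, h1⟩
        · exact absurd h1 hσne
        · exact h1
      right; right
      rw [eqmk x, ← ht, ← hd]
      congr 1
      rw [eqmk2 d, hb, hfst, hs1s0]
  · -- σ = 1, s0 = 0, so s1 = 1
    have hs1 : (s1 : ℝ) = 1 := by
      rcases hcase with ⟨-, h1⟩ | ⟨h1, -⟩
      · exact h1
      · exact absurd hσ0 h1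
    have hfst : (ofLex d).1 = s1 := Subtype.ext (by rw [hσ1, hs1])
    rcases Bool.eq_false_or_eq_true (ofLex d).2 with hb | hb
    · exfalso
      apply hd2
      rw [eqmk2 d, hb]
      have h9 : (ofLex d).1 = (⟨1, by norm_num⟩ : UnitInt) := Subtype.ext (by rw [hσ1])
      rw [h9]
      rfl
    · right; right
      rw [eqmk x, ← ht, ← hd]
      congr 1
      rw [eqmk2 d, hb, hfst]

end KDProof
/-- For `n ≥ 1`, a topological space `X` is `n`-fibered if there is a continuous map from
`X` to a metrizable space all of whose fibers have at most `n` elements. -/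
def NFibered (n : ℕ) (X : Type*) [TopologicalSpace X] : Prop :=
  ∃ (M : Type) (_ : TopologicalSpace M), MetrizableSpace M ∧
    ∃ f : X → M, Continuous f ∧ ∀ z : M, (f ⁻¹' {z}).encard ≤ n

open KDProof

/-- The space `KD` is a continuous image of a compact Hausdorff `3`-fibered space. -/
theorem KD_image_of_threeFibered :
    ∃ (F : Type) (_ : TopologicalSpace F), CompactSpace F ∧ T2Space F ∧
      NFibered 3 F ∧ ∃ g : F → KD, Continuous g ∧ Function.Surjective g := by
  classical
  have hGsub : G ⊆ Set.univ ×ˢ Metric.sphere (0:ℂ) 1 := by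
    rintro ⟨k, z⟩ ⟨y, hy⟩
    rw [← hy]
    refine ⟨trivial, ?_⟩
    show Phi y ∈ Metric.sphere (0:ℂ) 1
    rw [Metric.mem_sphere, Complex.dist_eq, sub_zero]
    exact abs_e _
  have hFsub : closure G ⊆ Set.univ ×ˢ Metric.sphere (0:ℂ) 1 :=
    closure_minimal hGsub (isClosed_univ.prod Metric.isClosed_sphere)
  have hFcomp : IsCompact (closure G) :=
    IsCompact.of_isClosed_subset (isCompact_univ.prod (isCompact_sphere 0 1))
      isClosed_closure hFsub
  haveI : CompactSpace ↥(closure G) := isCompact_iff_compactSpace.mp hFcomp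
  refine ⟨↥(closure G), inferInstance, inferInstance, inferInstance, ?_, ?_⟩
  · refine ⟨ℝ × ℂ, inferInstance, inferInstance,
      fun w => (P w.1.1, w.1.2), ?_, ?_⟩
    · exact (continuous_P.comp (continuous_fst.comp continuous_subtype_val)).prodMk
        (continuous_snd.comp continuous_subtype_val)
    · rintro ⟨tr, z⟩
      rcases Set.eq_empty_or_nonempty
        ((fun w : ↥(closure G) => (P w.1.1, w.1.2)) ⁻¹' {(tr, z)}) with hE | ⟨w0, hw0⟩
      · rw [hE]; simp
      have hw0' : P w0.1.1 = tr ∧ w0.1.2 = z := by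
        have := hw0
        rw [Set.mem_preimage, Set.mem_singleton_iff, Prod.mk.injEq] at this
        exact this
      have habs : ‖z‖ = 1 := by
        have hm := (hFsub w0.2).2
        rw [Metric.mem_sphere, Complex.dist_eq, sub_zero] at hm
        rw [← hw0'.2]
        exact hm
      obtain ⟨x0, hx0⟩ := Quot.exists_rep w0.1.1
      have ht0mem : tr ∈ Set.Icc (0:ℝ) 1 := by
        rw [← hw0'.1, ← hx0]
        exact (ofLex x0).1.2
      set t0 : UnitInt := ⟨tr, ht0mem⟩ with ht0
      obtain ⟨s0, hs0, he0⟩ := exists_s0 habs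
      set s0I : UnitInt := ⟨s0, hs0.1, le_of_lt hs0.2⟩ with hs0I
      obtain ⟨s1I, he1, hcase⟩ : ∃ s1I : UnitInt, e (s1I : ℝ) = z ∧
          (((s0I : ℝ) = 0 ∧ (s1I : ℝ) = 1) ∨ (((s0I : ℝ) ≠ 0) ∧ s1I = s0I)) := by
        by_cases h00 : s0 = 0
        · refine ⟨⟨1, by norm_num⟩, ?_, Or.inl ⟨h00, rfl⟩⟩
          show e 1 = z
          rw [e_one, ← he0, h00, e_zero]
        · exact ⟨s0I, he0, Or.inr ⟨h00, rfl⟩⟩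
      have hinj : Set.InjOn (fun w : ↥(closure G) => w.1.1)
          ((fun w : ↥(closure G) => (P w.1.1, w.1.2)) ⁻¹' {(tr, z)}) := by
        intro w hw w' hw' he
        rw [Set.mem_preimage, Set.mem_singleton_iff, Prod.mk.injEq] at hw hw'
        apply Subtype.ext
        apply Prod.ext he
        rw [hw.2, hw'.2]
      have himg : (fun w : ↥(closure G) => w.1.1) ''
          ((fun w : ↥(closure G) => (P w.1.1, w.1.2)) ⁻¹' {(tr, z)}) ⊆
          {q (mk t0 bot2), q (mk t0 (toLex (s0I, true))), q (mk t0 (toLex (s1I, false)))} := by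
        rintro k ⟨w, hw, rfl⟩
        rw [Set.mem_preimage, Set.mem_singleton_iff, Prod.mk.injEq] at hw
        obtain ⟨xw, hxw⟩ := Quot.exists_rep w.1.1
        have hclw : (q xw, z) ∈ closure G := by
          have h2 : (q xw, z) = w.1 := by
            apply Prod.ext
            · exact hxw
            · exact hw.2.symm
          rw [h2]
          exact w.2
        have htw : (ofLex xw).1 = t0 := by
          apply Subtype.ext
          show ((ofLex xw).1 : ℝ) = tr
          rw [← hw.1, ← hxw]
          rfl
        have hmt := mem_T s0I s1I hs0.2 he0 he1 hcase hclw
        rw [htw] at hmt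
        simp only [Set.mem_insert_iff, Set.mem_singleton_iff]
        rw [← hxw]
        exact hmt
      calc ((fun w : ↥(closure G) => (P w.1.1, w.1.2)) ⁻¹' {(tr, z)}).encard
          = ((fun w : ↥(closure G) => w.1.1) ''
            ((fun w : ↥(closure G) => (P w.1.1, w.1.2)) ⁻¹' {(tr, z)})).encard :=
            (hinj.encard_image).symm
        _ ≤ ({q (mk t0 bot2), q (mk t0 (toLex (s0I, true))),
              q (mk t0 (toLex (s1I, false)))} : Set KD).encard := Set.encard_le_encard himg
        _ ≤ 3 := by
            apply le_trans (Set.encard_insert_le _ _)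
            apply le_trans (add_le_add_left (Set.encard_insert_le _ _) 1)
            rw [Set.encard_singleton]
            norm_num
  · refine ⟨fun w => w.1.1, continuous_fst.comp continuous_subtype_val, ?_⟩
    intro k
    obtain ⟨x, hx⟩ := Quot.exists_rep k
    exact ⟨⟨(q x, Phi x), subset_closure ⟨x, rfl⟩⟩, hx⟩
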